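/- Let H be a Hilbert space, let A₀(z) and A₁(z) be compact self-adjoint operators on H for z < 0 such that z ↦ A₀(z) is norm-continuous on (−∞,0) and z ↦ A₁(z) is norm-continuous on (−∞,0] (i.e. A₁ extends norm-continuously to z = 0, with A₁(0) compact). Let f : (−∞,0) → ℝ satisfy f(z) → 0 as z → 0⁻, and suppose that for every γ > 0 the limit lim_{z→0⁻} f(z)·d(γ, A₀(z)) = l(γ) exists and l is continuous on (0,∞). Then for every γ > 0 one also has lim_{z→0⁻} f(z)·d(γ, A₀(z)+A₁(z)) = l(γ). -/

import Mathlib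

open MeasureTheory Real Filter
open scoped Topology
set_option linter.unusedSectionVars false

noncomputable section

/-- `d(λ, A)` relative to a subset `S` of the Hilbert space: the supremum of the dimensions
of finite-dimensional subspaces `F ⊆ S` such that `⟨Au, u⟩ > λ‖u‖²` for every nonzero
`u ∈ F`.  For `S = Set.univ` this is the quantity `d(λ, A)` of the Birman–Schwinger
principle. -/
def dOn {E : Type*} [NormedAddCommGroup E] [InnerProductSpace ℝ E]
    (S : Set E) (lam : ℝ) (A : E →L[ℝ] E) : ℕ∞ :=
  ⨆ F : {F : Submodule ℝ E // (F : Set E) ⊆ S ∧ FiniteDimensional ℝ F ∧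
      ∀ u ∈ F, u ≠ 0 → lam * ‖u‖ ^ 2 < (inner ℝ (A u) u : ℝ)},
    (Module.finrank ℝ (F : Submodule ℝ E) : ℕ∞)

section AuxiliaryLemmas

variable {H : Type*} [NormedAddCommGroup H] [InnerProductSpace ℝ H] [CompleteSpace H]

/-- witness lower bound -/
lemma le_dOn (lam : ℝ) (A : H →L[ℝ] H) (F : Submodule ℝ H)
    (hfd : FiniteDimensional ℝ F)
    (hF : ∀ u ∈ F, u ≠ 0 → lam * ‖u‖ ^ 2 < (inner ℝ (A u) u : ℝ)) :
    (Module.finrank ℝ F : ℕ∞) ≤ dOn Set.univ lam A :=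
  le_iSup (fun F : {F : Submodule ℝ H // (F : Set H) ⊆ Set.univ ∧ FiniteDimensional ℝ F ∧
      ∀ u ∈ F, u ≠ 0 → lam * ‖u‖ ^ 2 < (inner ℝ (A u) u : ℝ)} =>
      (Module.finrank ℝ (F : Submodule ℝ H) : ℕ∞))
    ⟨F, Set.subset_univ _, hfd, hF⟩

lemma dOn_le (lam : ℝ) (A : H →L[ℝ] H) (n : ℕ)
    (h : ∀ F : Submodule ℝ H, FiniteDimensional ℝ F →
      (∀ u ∈ F, u ≠ 0 → lam * ‖u‖ ^ 2 < (inner ℝ (A u) u : ℝ)) →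
      Module.finrank ℝ F ≤ n) :
    dOn Set.univ lam A ≤ (n : ℕ∞) := by
  refine iSup_le fun F => ?_
  exact_mod_cast Nat.cast_le.2 (h F F.2.2.1 F.2.2.2)

lemma dOn_mono (lam lam' : ℝ) (hll : lam ≤ lam') (A : H →L[ℝ] H) :
    dOn Set.univ lam' A ≤ dOn Set.univ lam A := by
  refine iSup_le fun F => ?_
  refine le_dOn lam A F F.2.2.1 fun u hu hu0 => lt_of_le_of_lt ?_ (F.2.2.2 u hu hu0)
  have : (0:ℝ) ≤ ‖u‖ ^ 2 := sq_nonneg _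
  nlinarith

/-- polarization bound on operator norm -/
lemma norm_le_of_forall_inner_le (A : H →L[ℝ] H)
    (hsym : ∀ u v : H, (inner ℝ (A u) v : ℝ) = inner ℝ u (A v))
    {c : ℝ} (hc : 0 ≤ c)
    (h : ∀ x : H, |(inner ℝ (A x) x : ℝ)| ≤ c * ‖x‖ ^ 2) : ‖A‖ ≤ c := by
  refine A.opNorm_le_bound hc fun x => ?_
  rcases eq_or_ne (A x) 0 with hAx | hAx
  · simp [hAx]
    positivity
  have hAxn : 0 < ‖A x‖ := norm_pos_iff.2 hAx
  set y : H := (‖x‖ / ‖A x‖) • A x with hy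
  have hyn : ‖y‖ = ‖x‖ := by
    rw [hy, norm_smul]
    rw [Real.norm_eq_abs, abs_div, abs_of_nonneg (norm_nonneg x), abs_of_nonneg (norm_nonneg _)]
    field_simp
  have key : 4 * (inner ℝ (A x) y : ℝ) =
      (inner ℝ (A (x + y)) (x + y) : ℝ) - (inner ℝ (A (x - y)) (x - y) : ℝ) := by
    have h1 : (inner ℝ (A y) x : ℝ) = (inner ℝ (A x) y : ℝ) := by
      rw [hsym y x, real_inner_comm]
    simp only [map_add, map_sub, inner_add_left, inner_add_right, inner_sub_left,
      inner_sub_right]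
    linarith
  have hb : (inner ℝ (A (x + y)) (x + y) : ℝ) - (inner ℝ (A (x - y)) (x - y) : ℝ)
      ≤ c * ‖x + y‖ ^ 2 + c * ‖x - y‖ ^ 2 := by
    have h1 := (abs_le.1 (h (x + y))).2
    have h2 := (abs_le.1 (h (x - y))).1
    linarith
  have hpar : ‖x + y‖ ^ 2 + ‖x - y‖ ^ 2 = 2 * (‖x‖ ^ 2 + ‖y‖ ^ 2) := by
    have := parallelogram_law_with_norm ℝ x y
    nlinarith [this]
  have hinner : (inner ℝ (A x) y : ℝ) = ‖x‖ * ‖A x‖ := by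
    rw [hy, real_inner_smul_right, real_inner_self_eq_norm_sq]
    field_simp
  have : 4 * (‖x‖ * ‖A x‖) ≤ c * (4 * ‖x‖ ^ 2) := by
    rw [← hinner]
    calc 4 * (inner ℝ (A x) y : ℝ) ≤ c * ‖x + y‖ ^ 2 + c * ‖x - y‖ ^ 2 := by rw [key]; exact hb
    _ = c * (‖x + y‖ ^ 2 + ‖x - y‖ ^ 2) := by ring
    _ = c * (4 * ‖x‖ ^ 2) := by rw [hpar, hyn]; ring
  rcases eq_or_lt_of_le (norm_nonneg x) with hx0 | hx0
  · exact absurd (by rw [show x = 0 from norm_eq_zero.1 hx0.symm, map_zero]) hAx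
  nlinarith

lemma exists_eigen_max (T : H →L[ℝ] H) (hT : IsCompactOperator T)
    {m : ℝ} (hm0 : 0 < m) (hTnorm : ‖T‖ ≤ m)
    (happrox : ∀ η : ℝ, 0 < η → ∃ x : H, ‖x‖ = 1 ∧ m - η < (inner ℝ (T x) x : ℝ)) :
    ∃ x : H, ‖x‖ = 1 ∧ T x = m • x := by
  have hseq : ∀ n : ℕ, ∃ x : H, ‖x‖ = 1 ∧ m - 1/(n+1) < (inner ℝ (T x) x : ℝ) :=
    fun n => happrox (1/(n+1)) (by positivity)
  choose x hx1 hx2 using hseq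
  have hTle : ∀ n, ‖T (x n)‖ ≤ m := by
    intro n
    calc ‖T (x n)‖ ≤ ‖T‖ * ‖x n‖ := T.le_opNorm _
    _ ≤ m := by rw [hx1]; simpa using hTnorm
  have hinner_le : ∀ n, (inner ℝ (T (x n)) (x n) : ℝ) ≤ m := by
    intro n
    calc (inner ℝ (T (x n)) (x n) : ℝ) ≤ ‖T (x n)‖ * ‖x n‖ := real_inner_le_norm _ _
    _ ≤ m := by rw [hx1]; simpa using hTle n
  have htend : Tendsto (fun n => (inner ℝ (T (x n)) (x n) : ℝ)) atTop (𝓝 m) := by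
    have hlow : Tendsto (fun n : ℕ => m - 1/(n+1)) atTop (𝓝 m) := by
      have := tendsto_one_div_add_atTop_nhds_zero_nat (𝕜 := ℝ)
      have h2 := (tendsto_const_nhds (x := m) (f := atTop (α := ℕ))).sub this
      simpa using h2
    exact tendsto_of_tendsto_of_tendsto_of_le_of_le hlow tendsto_const_nhds
      (fun n => (hx2 n).le) hinner_le
  have hb : ∀ n, ‖T (x n) - m • x n‖ ^ 2 ≤ 2*m^2 - 2*m*(inner ℝ (T (x n)) (x n) : ℝ) := by
    intro n
    have hns := norm_sub_sq_real (T (x n)) (m • x n)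
    have h1 : (inner ℝ (T (x n)) (m • x n) : ℝ) = m * (inner ℝ (T (x n)) (x n) : ℝ) :=
      real_inner_smul_right _ _ _
    have h2 : ‖m • x n‖ ^ 2 = m ^ 2 := by
      rw [norm_smul, hx1, Real.norm_eq_abs]; rw [mul_pow, sq_abs]; ring
    have h3 : ‖T (x n)‖ ^ 2 ≤ m ^ 2 := by
      have := hTle n
      nlinarith [norm_nonneg (T (x n))]
    rw [hns, h1, h2]
    nlinarith
  have hsq : Tendsto (fun n => ‖T (x n) - m • x n‖ ^ 2) atTop (𝓝 0) := by
    have hg : Tendsto (fun n => 2*m^2 - 2*m*(inner ℝ (T (x n)) (x n) : ℝ)) atTop (𝓝 0) := by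
      have h := (tendsto_const_nhds (x := 2*m^2) (f := atTop (α := ℕ))).sub
        (htend.const_mul (2*m))
      have : (2*m^2 - 2*m*m : ℝ) = 0 := by ring
      rw [this] at h
      exact h.congr (fun n => by ring)
    exact squeeze_zero (fun n => sq_nonneg _) hb hg
  have hdiff : Tendsto (fun n => T (x n) - m • x n) atTop (𝓝 0) := by
    rw [tendsto_zero_iff_norm_tendsto_zero]
    have := hsq.sqrt
    simpa [Real.sqrt_sq (norm_nonneg _)] using this
  obtain ⟨K, hK, hKsub⟩ := hT.image_closedBall_subset_compact (𝕜₁ := ℝ) 1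
  have hmem : ∀ n, T (x n) ∈ K := fun n =>
    hKsub ⟨x n, by simp [Metric.mem_closedBall, hx1], rfl⟩
  obtain ⟨y, _, φ, hφ, hconv⟩ := hK.tendsto_subseq hmem
  have h1 : Tendsto (fun k => m • x (φ k)) atTop (𝓝 y) := by
    have := hconv.sub (hdiff.comp hφ.tendsto_atTop)
    simpa using this
  have h2 : Tendsto (fun k => x (φ k)) atTop (𝓝 (m⁻¹ • y)) := by
    have := h1.const_smul m⁻¹
    simpa [smul_smul, inv_mul_cancel₀ hm0.ne'] using this
  have hxinf1 : ‖m⁻¹ • y‖ = 1 := by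
    have hn : Tendsto (fun k => ‖x (φ k)‖) atTop (𝓝 ‖m⁻¹ • y‖) := h2.norm
    have hc : Tendsto (fun _ : ℕ => (1:ℝ)) atTop (𝓝 1) := tendsto_const_nhds
    exact tendsto_nhds_unique (hn.congr (fun k => by rw [hx1])) hc
  have hTxinf : T (m⁻¹ • y) = y :=
    tendsto_nhds_unique ((T.continuous.tendsto _).comp h2) hconv
  refine ⟨m⁻¹ • y, hxinf1, ?_⟩
  rw [hTxinf, smul_smul, mul_inv_cancel₀ hm0.ne', one_smul]

lemma exists_eigenvector (T : H →L[ℝ] H) (hT : IsCompactOperator T)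
    (hsym : ∀ u v : H, (inner ℝ (T u) v : ℝ) = inner ℝ u (T v))
    (lam : ℝ) (hlam : 0 < lam)
    (hbig : ∃ u : H, ‖u‖ = 1 ∧ lam < |(inner ℝ (T u) u : ℝ)|) :
    ∃ (x : H) (μ : ℝ), ‖x‖ = 1 ∧ lam < |μ| ∧ T x = μ • x := by
  obtain ⟨u, hu1, hu2⟩ := hbig
  set S : Set ℝ := {r : ℝ | ∃ x : H, ‖x‖ = 1 ∧ (inner ℝ (T x) x : ℝ) = r} with hS
  have hSne : S.Nonempty := ⟨_, u, hu1, rfl⟩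
  have hbddA : BddAbove S := by
    refine ⟨‖T‖, fun r hr => ?_⟩
    obtain ⟨z, hz1, hz2⟩ := hr
    calc r = (inner ℝ (T z) z : ℝ) := hz2.symm
    _ ≤ ‖T z‖ * ‖z‖ := real_inner_le_norm _ _
    _ ≤ ‖T‖ := by rw [hz1, mul_one]; simpa [hz1] using T.le_opNorm z
  have hbddB : BddBelow S := by
    refine ⟨-‖T‖, fun r hr => ?_⟩
    obtain ⟨z, hz1, hz2⟩ := hr
    have := abs_real_inner_le_norm (T z) z
    have h2 : ‖T z‖ * ‖z‖ ≤ ‖T‖ := by rw [hz1, mul_one]; simpa [hz1] using T.le_opNorm z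
    have := (abs_le.1 ((abs_real_inner_le_norm (T z) z).trans h2)).1
    linarith [hz2 ▸ this]
  set mp := sSup S with hmp
  set mn := sInf S with hmn
  set c := max mp (-mn) with hc
  have hmple : (inner ℝ (T u) u : ℝ) ≤ mp := le_csSup hbddA ⟨u, hu1, rfl⟩
  have hmnle : mn ≤ (inner ℝ (T u) u : ℝ) := csInf_le hbddB ⟨u, hu1, rfl⟩
  have hclam : lam < c := by
    rcases abs_cases ((inner ℝ (T u) u : ℝ)) with ⟨habs, _⟩ | ⟨habs, _⟩
    · exact lt_of_lt_of_le (habs ▸ hu2) (le_max_of_le_left hmple)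
    · refine lt_of_lt_of_le (habs ▸ hu2) (le_max_of_le_right (by linarith))
  have hc0 : 0 < c := lt_trans hlam hclam
  -- bound form by c
  have hform : ∀ x : H, |(inner ℝ (T x) x : ℝ)| ≤ c * ‖x‖ ^ 2 := by
    intro z
    rcases eq_or_ne z 0 with rfl | hz
    · simp
    · have hzn : 0 < ‖z‖ := norm_pos_iff.2 hz
      set w : H := ‖z‖⁻¹ • z with hw
      have hw1 : ‖w‖ = 1 := by
        rw [hw, norm_smul, Real.norm_eq_abs, abs_of_nonneg (by positivity)]
        field_simp
      have hmem : (inner ℝ (T w) w : ℝ) ∈ S := ⟨w, hw1, rfl⟩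
      have h1 : (inner ℝ (T w) w : ℝ) ≤ mp := le_csSup hbddA hmem
      have h2 : mn ≤ (inner ℝ (T w) w : ℝ) := csInf_le hbddB hmem
      have hww : (inner ℝ (T w) w : ℝ) = ‖z‖⁻¹ ^ 2 * (inner ℝ (T z) z : ℝ) := by
        rw [hw]
        rw [T.map_smul, inner_smul_left, inner_smul_right]
        simp [RCLike.conj_to_real]
        ring
      have habs : |(inner ℝ (T w) w : ℝ)| ≤ c := by
        rcases abs_cases ((inner ℝ (T w) w : ℝ)) with ⟨h, _⟩ | ⟨h, _⟩
        · rw [h]; exact le_trans h1 (le_max_left _ _)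
        · rw [h]; exact le_trans (by linarith : -(inner ℝ (T w) w : ℝ) ≤ -mn) (le_max_right _ _)
      have : |(inner ℝ (T z) z : ℝ)| = ‖z‖ ^ 2 * |(inner ℝ (T w) w : ℝ)| := by
        rw [hww, abs_mul, abs_of_nonneg (by positivity : (0:ℝ) ≤ ‖z‖⁻¹ ^ 2)]
        field_simp
      rw [this]
      calc ‖z‖ ^ 2 * |(inner ℝ (T w) w : ℝ)| ≤ ‖z‖ ^ 2 * c := by
            exact mul_le_mul_of_nonneg_left habs (by positivity)
      _ = c * ‖z‖ ^ 2 := by ring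
  have hTnorm : ‖T‖ ≤ c := norm_le_of_forall_inner_le T hsym hc0.le hform
  rcases le_or_gt (-mn) mp with hcase | hcase
  · -- c = mp
    have hceq : c = mp := max_eq_left hcase
    obtain ⟨x, hx1, hx2⟩ := exists_eigen_max T hT (hceq ▸ hc0) (hceq ▸ hTnorm)
      (fun η hη => by
        obtain ⟨r, hrS, hrlt⟩ := exists_lt_of_lt_csSup hSne (by linarith : mp - η < mp)
        obtain ⟨z, hz1, hz2⟩ := hrS
        exact ⟨z, hz1, by rw [hz2]; exact hrlt⟩)
    exact ⟨x, mp, hx1, by rw [abs_of_pos (hceq ▸ hc0)]; exact hceq ▸ hclam, hx2⟩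
  · -- c = -mn, use -T
    have hceq : c = -mn := max_eq_right hcase.le
    have hnegT : IsCompactOperator (⇑(-T)) := by
      have := hT.neg
      simpa using this
    have hnorm' : ‖-T‖ ≤ -mn := by rw [norm_neg]; exact hceq ▸ hTnorm
    obtain ⟨x, hx1, hx2⟩ := exists_eigen_max (-T) hnegT (hceq ▸ hc0) hnorm'
      (fun η hη => by
        obtain ⟨r, hrS, hrlt⟩ := exists_lt_of_csInf_lt hSne (by linarith : mn < mn + η)
        obtain ⟨z, hz1, hz2⟩ := hrS
        refine ⟨z, hz1, ?_⟩
        have : (inner ℝ ((-T) z) z : ℝ) = -r := by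
          rw [ContinuousLinearMap.neg_apply, inner_neg_left, hz2]
        rw [this]; linarith)
    refine ⟨x, mn, hx1, ?_, ?_⟩
    · rw [abs_of_neg (by linarith : mn < 0)]; exact hceq ▸ hclam
    · have : -T x = (-mn) • x := hx2
      have h2 : T x = -((-mn) • x) := by
        rw [← this]; simp
      rw [h2, neg_smul, neg_neg]

lemma exists_nonzero_inf (F W₁ G₁ W₂ G₂ : Submodule ℝ H)
    [FiniteDimensional ℝ F] [FiniteDimensional ℝ W₁] [FiniteDimensional ℝ W₂]
    (h₁ : IsCompl W₁ G₁) (h₂ : IsCompl W₂ G₂)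
    (h : Module.finrank ℝ W₁ + Module.finrank ℝ W₂ < Module.finrank ℝ F) :
    ∃ u : H, u ≠ 0 ∧ u ∈ F ∧ u ∈ G₁ ∧ u ∈ G₂ := by
  set π₁ := (W₁.linearProjOfIsCompl G₁ h₁).comp F.subtype with hπ₁
  set π₂ := (W₂.linearProjOfIsCompl G₂ h₂).comp F.subtype with hπ₂
  set φ : F →ₗ[ℝ] W₁ × W₂ := π₁.prod π₂ with hφ
  have hker : LinearMap.ker φ ≠ ⊥ := by
    intro hbot
    have hinj : Function.Injective φ := LinearMap.ker_eq_bot.1 hbot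
    have := LinearMap.finrank_le_finrank_of_injective hinj
    rw [Module.finrank_prod] at this
    omega
  obtain ⟨⟨u, huF⟩, humem, hune⟩ := Submodule.exists_mem_ne_zero_of_ne_bot hker
  have h1 : π₁ ⟨u, huF⟩ = 0 ∧ π₂ ⟨u, huF⟩ = 0 := by
    have := humem
    rw [LinearMap.mem_ker] at this
    exact ⟨congrArg Prod.fst this, congrArg Prod.snd this⟩
  refine ⟨u, ?_, huF, ?_, ?_⟩
  · intro h0
    exact hune (by simp [Subtype.ext_iff, h0])
  · exact (Submodule.linearProjOfIsCompl_apply_eq_zero_iff h₁).1 h1.1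
  · exact (Submodule.linearProjOfIsCompl_apply_eq_zero_iff h₂).1 h1.2

/-- two-pair upper bound -/
lemma dOn_add_le (A B : H →L[ℝ] H) (lam₁ lam₂ : ℝ)
    (W₁ G₁ W₂ G₂ : Submodule ℝ H)
    [FiniteDimensional ℝ W₁] [FiniteDimensional ℝ W₂]
    (h₁ : IsCompl W₁ G₁) (h₂ : IsCompl W₂ G₂)
    (hG₁ : ∀ u ∈ G₁, (inner ℝ (A u) u : ℝ) ≤ lam₁ * ‖u‖ ^ 2)
    (hG₂ : ∀ u ∈ G₂, (inner ℝ (B u) u : ℝ) ≤ lam₂ * ‖u‖ ^ 2) :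
    dOn Set.univ (lam₁ + lam₂) (A + B)
      ≤ ((Module.finrank ℝ W₁ + Module.finrank ℝ W₂ : ℕ) : ℕ∞) := by
  refine dOn_le _ _ _ fun F hFd hF => ?_
  by_contra hlt
  push_neg at hlt
  haveI := hFd
  obtain ⟨u, hu0, huF, huG₁, huG₂⟩ := exists_nonzero_inf F W₁ G₁ W₂ G₂ h₁ h₂ hlt
  have hstrict := hF u huF hu0
  have hsum : (inner ℝ ((A + B) u) u : ℝ) = (inner ℝ (A u) u : ℝ) + (inner ℝ (B u) u : ℝ) := by
    rw [ContinuousLinearMap.add_apply, inner_add_left]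
  have := hG₁ u huG₁
  have := hG₂ u huG₂
  rw [hsum] at hstrict
  nlinarith

lemma eig_family_bound (A : H →L[ℝ] H) (hA : IsCompactOperator A)
    (lam : ℝ) (hlam : 0 < lam) :
    ∃ M : ℕ, ∀ (n : ℕ) (v : Fin n → H) (μ : Fin n → ℝ), Orthonormal ℝ v →
      (∀ i, A (v i) = μ i • v i) → (∀ i, lam < |μ i|) → n ≤ M := by
  obtain ⟨K, hK, hKsub⟩ := hA.image_closedBall_subset_compact (𝕜₁ := ℝ) 1
  have htb := hK.totallyBounded
  rw [Metric.totallyBounded_iff] at htb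
  obtain ⟨t, htfin, htcov⟩ := htb (lam / 2) (by positivity)
  refine ⟨htfin.toFinset.card, fun n v μ hv heig habs => ?_⟩
  have hmemK : ∀ i, A (v i) ∈ K := fun i =>
    hKsub ⟨v i, by simp [Metric.mem_closedBall, (hv.1 i).le, hv.1 i], rfl⟩
  have hcenter : ∀ i : Fin n, ∃ c ∈ t, A (v i) ∈ Metric.ball c (lam / 2) := by
    intro i
    have := htcov (hmemK i)
    simpa using this
  choose c hc1 hc2 using hcenter
  have hdist : ∀ i j : Fin n, i ≠ j → lam < dist (A (v i)) (A (v j)) := by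
    intro i j hij
    rw [dist_eq_norm, heig i, heig j]
    have hsq : ‖μ i • v i - μ j • v j‖ ^ 2 = μ i ^ 2 + μ j ^ 2 := by
      rw [norm_sub_sq_real]
      have h1 : ‖μ i • v i‖ ^ 2 = μ i ^ 2 := by
        rw [norm_smul, hv.1 i, Real.norm_eq_abs, mul_one, sq_abs]
      have h2 : ‖μ j • v j‖ ^ 2 = μ j ^ 2 := by
        rw [norm_smul, hv.1 j, Real.norm_eq_abs, mul_one, sq_abs]
      have h3 : (inner ℝ (μ i • v i) (μ j • v j) : ℝ) = 0 := by
        rw [real_inner_smul_left, real_inner_smul_right, hv.2 hij]; ring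
      rw [h1, h2, h3]; ring
    have hlt : lam ^ 2 < ‖μ i • v i - μ j • v j‖ ^ 2 := by
      rw [hsq]
      have := habs i
      have h4 : lam ^ 2 < μ i ^ 2 := by
        have := pow_lt_pow_left₀ (habs i) hlam.le two_ne_zero
        rwa [sq_abs] at this
      nlinarith [sq_nonneg (μ j)]
    exact lt_of_pow_lt_pow_left₀ 2 (norm_nonneg _) hlt
  have hinj : Function.Injective c := by
    intro i j hij
    by_contra hne
    have h1 := hc2 i
    have h2 := hc2 j
    have := hdist i j hne
    rw [Metric.mem_ball] at h1 h2
    have : dist (A (v i)) (A (v j)) ≤ dist (A (v i)) (c i) + dist (c j) (A (v j)) := by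
      rw [hij]; exact dist_triangle _ _ _
    rw [dist_comm (c j)] at this
    linarith [hdist i j hne]
  have hinj' : Function.Injective (fun i : Fin n => (⟨c i, htfin.mem_toFinset.2 (hc1 i)⟩ :
      ↥htfin.toFinset)) := by
    intro i j hij
    exact hinj (congrArg Subtype.val hij)
  calc n = Fintype.card (Fin n) := (Fintype.card_fin n).symm
  _ ≤ Fintype.card ↥htfin.toFinset := Fintype.card_le_of_injective _ hinj'
  _ = htfin.toFinset.card := Fintype.card_coe _

lemma spectral_pair (A : H →L[ℝ] H) (hA : IsCompactOperator A)
    (hsym : ∀ u v : H, (inner ℝ (A u) v : ℝ) = inner ℝ u (A v)) (lam : ℝ) (hlam : 0 < lam) :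
    ∃ (W G : Submodule ℝ H), FiniteDimensional ℝ W ∧ IsCompl W G ∧
      (∀ u ∈ G, (inner ℝ (A u) u : ℝ) ≤ lam * ‖u‖ ^ 2) ∧
      (∀ u ∈ W, u ≠ 0 → lam * ‖u‖ ^ 2 < (inner ℝ (A u) u : ℝ)) := by
  classical
  obtain ⟨M, hM⟩ := eig_family_bound A hA lam hlam
  set P : ℕ → Prop := fun n => ∃ v : Fin n → H, ∃ μ : Fin n → ℝ, Orthonormal ℝ v ∧
    (∀ i, A (v i) = μ i • v i) ∧ ∀ i, lam < |μ i| with hP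
  have hP0 : P 0 := ⟨Fin.elim0, Fin.elim0, ⟨fun i => i.elim0, fun i => i.elim0⟩,
    fun i => i.elim0, fun i => i.elim0⟩
  have hbound : ∀ n, P n → n ≤ M := fun n ⟨v, μ, h1, h2, h3⟩ => hM n v μ h1 h2 h3
  set N := Nat.findGreatest P M with hN
  have hPN : P N := Nat.findGreatest_spec (Nat.zero_le M) hP0
  have hmax : ¬ P (N + 1) := fun hPn => by
    have := Nat.le_findGreatest (hbound _ hPn) hPn
    omega
  obtain ⟨v, μ, hv, heig, habs⟩ := hPN
  set W : Submodule ℝ H := Submodule.span ℝ (Set.range v) with hW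
  haveI : FiniteDimensional ℝ W := FiniteDimensional.span_of_finite ℝ (Set.finite_range v)
  have hvW : ∀ i, v i ∈ W := fun i => Submodule.subset_span ⟨i, rfl⟩
  -- invariance of Wᗮ
  have hinv : ∀ x ∈ Wᗮ, A x ∈ Wᗮ := by
    intro x hx
    rw [Submodule.mem_orthogonal]
    intro y hy
    induction hy using Submodule.span_induction with
    | mem y hy =>
      obtain ⟨i, rfl⟩ := hy
      rw [real_inner_comm, hsym]
      have : (inner ℝ (A (v i)) x : ℝ) = μ i * (inner ℝ (v i) x : ℝ) := by
        rw [heig i, real_inner_smul_left]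
      rw [real_inner_comm, this]
      have hx0 : (inner ℝ (v i) x : ℝ) = 0 := (Submodule.mem_orthogonal W x).1 hx _ (hvW i)
      rw [hx0, mul_zero]
    | zero => rw [inner_zero_left]
    | add y z _ _ hy hz => rw [inner_add_left, hy, hz, add_zero]
    | smul a y _ hy => rw [real_inner_smul_left, hy, mul_zero]
  -- the key maximality bound
  have hQ : ∀ y : H, ∀ u ∈ Wᗮ, (inner ℝ ((Wᗮ.subtypeL ∘L Wᗮ.orthogonalProjection) y) u : ℝ)
      = inner ℝ y u := by
    intro y u hu
    have hsub := Submodule.sub_starProjection_mem_orthogonal (K := Wᗮ) y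
    have : (inner ℝ (y - (Wᗮ.orthogonalProjection y : H)) u : ℝ) = 0 := by
      rw [real_inner_comm]
      exact Submodule.inner_right_of_mem_orthogonal hu hsub
    rw [inner_sub_left] at this
    simp only [ContinuousLinearMap.comp_apply, Submodule.subtypeL_apply]
    linarith
  have hWbound : ∀ w ∈ Wᗮ, |(inner ℝ (A w) w : ℝ)| ≤ lam * ‖w‖ ^ 2 := by
    by_contra hcon
    push_neg at hcon
    obtain ⟨w, hwmem, hwgt⟩ := hcon
    have hw0 : w ≠ 0 := by
      intro h0
      rw [h0] at hwgt
      simp at hwgt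
    have hwn : 0 < ‖w‖ := norm_pos_iff.2 hw0
    set Q : H →L[ℝ] H := Wᗮ.subtypeL ∘L Wᗮ.orthogonalProjection with hQdef
    have hQmem : ∀ y, Q y ∈ Wᗮ := fun y => by
      simp only [hQdef, ContinuousLinearMap.comp_apply, Submodule.subtypeL_apply]
      exact SetLike.coe_mem _
    have hQid : ∀ y ∈ Wᗮ, Q y = y := fun y hy => by
      simp only [hQdef, ContinuousLinearMap.comp_apply, Submodule.subtypeL_apply]
      exact Submodule.starProjection_eq_self_iff.2 hy
    set T : H →L[ℝ] H := Q ∘L A ∘L Q with hT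
    have hTcomp : IsCompactOperator T := by
      have h1 : IsCompactOperator (⇑A ∘ ⇑Q) := hA.comp_clm Q
      have h2 : IsCompactOperator (⇑Q ∘ (⇑A ∘ ⇑Q)) := h1.continuous_comp Q.continuous
      exact h2
    have hTsym : ∀ a b : H, (inner ℝ (T a) b : ℝ) = inner ℝ a (T b) := by
      intro a b
      simp only [hT, ContinuousLinearMap.comp_apply]
      calc (inner ℝ (Q (A (Q a))) b : ℝ) = inner ℝ (A (Q a)) (Q b) := by
            simp only [hQdef, ContinuousLinearMap.comp_apply, Submodule.subtypeL_apply]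
            exact Submodule.inner_starProjection_left_eq_right _ _ _
      _ = inner ℝ (Q a) (A (Q b)) := hsym _ _
      _ = inner ℝ a (Q (A (Q b))) := by
            simp only [hQdef, ContinuousLinearMap.comp_apply, Submodule.subtypeL_apply]
            exact Submodule.inner_starProjection_left_eq_right _ _ _
    -- a unit vector with big form
    set u : H := ‖w‖⁻¹ • w with hu
    have humem : u ∈ Wᗮ := Submodule.smul_mem _ _ hwmem
    have hu1 : ‖u‖ = 1 := by
      rw [hu, norm_smul, Real.norm_eq_abs, abs_of_nonneg (by positivity)]
      field_simp
    have hform : (inner ℝ (T u) u : ℝ) = inner ℝ (A u) u := by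
      have h1 : Q u = u := hQid u humem
      simp only [hT, ContinuousLinearMap.comp_apply, h1]
      exact hQ (A u) u humem
    have hbig : lam < |(inner ℝ (T u) u : ℝ)| := by
      rw [hform]
      have : (inner ℝ (A u) u : ℝ) = ‖w‖⁻¹ ^ 2 * (inner ℝ (A w) w : ℝ) := by
        rw [hu, A.map_smul, real_inner_smul_left, real_inner_smul_right]
        ring
      rw [this, abs_mul, abs_of_nonneg (by positivity : (0:ℝ) ≤ ‖w‖⁻¹ ^ 2)]
      have h3 := mul_lt_mul_of_pos_left hwgt (show (0:ℝ) < ‖w‖⁻¹ ^ 2 by positivity)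
      calc lam = ‖w‖⁻¹ ^ 2 * (lam * ‖w‖ ^ 2) := by field_simp
      _ < ‖w‖⁻¹ ^ 2 * |(inner ℝ (A w) w : ℝ)| := h3
    obtain ⟨x, ν, hx1, hν, hxeig⟩ := exists_eigenvector T hTcomp hTsym lam hlam ⟨u, hu1, hbig⟩
    have hν0 : ν ≠ 0 := fun h0 => by rw [h0] at hν; simp at hν; linarith
    have hxW : x ∈ Wᗮ := by
      have : x = ν⁻¹ • T x := by rw [hxeig, smul_smul, inv_mul_cancel₀ hν0, one_smul]
      rw [this]
      exact Submodule.smul_mem _ _ (hQmem _)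
    have hAxW : A x ∈ Wᗮ := hinv x hxW
    have hAx : A x = ν • x := by
      have h1 : T x = A x := by
        simp only [hT, ContinuousLinearMap.comp_apply, hQid x hxW, hQid _ hAxW]
      rw [← h1, hxeig]
    -- extend the family
    have hPn : P (N + 1) := by
      refine ⟨Fin.snoc v x, Fin.snoc μ ν, ?_, ?_, ?_⟩
      · rw [orthonormal_iff_ite]
        have hvv := orthonormal_iff_ite.1 hv
        have hxv : ∀ j : Fin N, (inner ℝ x (v j) : ℝ) = 0 := fun j => by
          rw [real_inner_comm]; exact (Submodule.mem_orthogonal W x).1 hxW _ (hvW j)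
        have hvx : ∀ j : Fin N, (inner ℝ (v j) x : ℝ) = 0 := fun j =>
          (Submodule.mem_orthogonal W x).1 hxW _ (hvW j)
        intro i j
        rcases Fin.eq_castSucc_or_eq_last i with ⟨i', rfl⟩ | rfl <;>
          rcases Fin.eq_castSucc_or_eq_last j with ⟨j', rfl⟩ | rfl
        · simp only [Fin.snoc_castSucc, hvv i' j', Fin.castSucc_inj]
        · simp only [Fin.snoc_castSucc, Fin.snoc_last, hvx i',
            if_neg (Fin.castSucc_lt_last i').ne]
        · simp only [Fin.snoc_castSucc, Fin.snoc_last, hxv j',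
            if_neg (Fin.castSucc_lt_last j').ne']
        · simp only [Fin.snoc_last, if_pos rfl]
          rw [real_inner_self_eq_norm_sq, hx1]; norm_num
      · intro i
        refine Fin.lastCases ?_ (fun i' => ?_) i
        · simp only [Fin.snoc_last]; exact hAx
        · simp only [Fin.snoc_castSucc]; exact heig i'
      · intro i
        refine Fin.lastCases ?_ (fun i' => ?_) i
        · simp only [Fin.snoc_last]; exact hν
        · simp only [Fin.snoc_castSucc]; exact habs i'
    exact hmax hPn
  -- now build W' and G
  set sp : Set (Fin N) := {i | lam < μ i} with hsp
  set w : sp → H := fun i => v i.1 with hwdef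
  have hworth : Orthonormal ℝ w := hv.comp _ Subtype.val_injective
  set W' : Submodule ℝ H := Submodule.span ℝ (Set.range w) with hW'
  haveI : FiniteDimensional ℝ W' := FiniteDimensional.span_of_finite ℝ (Set.finite_range w)
  have hwW' : ∀ i : sp, w i ∈ W' := fun i => Submodule.subset_span ⟨i, rfl⟩
  refine ⟨W', W'ᗮ, inferInstance, Submodule.isCompl_orthogonal_of_hasOrthogonalProjection, ?_, ?_⟩
  · -- form ≤ lam on W'ᗮ
    intro u hu
    obtain ⟨y, hy, z, hz, huyz⟩ := W.exists_add_mem_mem_orthogonal u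
    obtain ⟨cf, hcf⟩ := (Submodule.mem_span_range_iff_exists_fun ℝ).1 hy
    -- coefficients on positive indices vanish
    have hczero : ∀ i : Fin N, lam < μ i → cf i = 0 := by
      intro i hi
      have h1 : (inner ℝ (v i) u : ℝ) = 0 :=
        Submodule.inner_right_of_mem_orthogonal (hwW' ⟨i, hi⟩) hu
      have h2 : (inner ℝ (v i) z : ℝ) = 0 :=
        Submodule.inner_right_of_mem_orthogonal (hvW i) hz
      have h3 : (inner ℝ (v i) y : ℝ) = cf i := by
        rw [← hcf]
        exact hv.inner_right_fintype cf i
      rw [huyz] at h1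
      rw [inner_add_right, h2, h3, add_zero] at h1
      exact h1
    have hAyW : A y ∈ W := by
      rw [← hcf, map_sum]
      refine Submodule.sum_mem _ fun i _ => ?_
      rw [A.map_smul, heig i, smul_smul]
      exact Submodule.smul_mem _ _ (hvW i)
    have hinner_yz : (inner ℝ y z : ℝ) = 0 := Submodule.inner_right_of_mem_orthogonal hy hz
    have hAyz : (inner ℝ (A y) z : ℝ) = 0 := Submodule.inner_right_of_mem_orthogonal hAyW hz
    have hAzy : (inner ℝ (A z) y : ℝ) = 0 := by
      rw [hsym, real_inner_comm]
      exact hAyz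
    have hAyy : (inner ℝ (A y) y : ℝ) ≤ lam * ‖y‖ ^ 2 := by
      have hAyexp : A y = ∑ i, (cf i * μ i) • v i := by
        rw [← hcf, map_sum]
        congr 1
        funext i
        rw [A.map_smul, heig i, smul_smul]
      have h1 : (inner ℝ (A y) y : ℝ) = ∑ i, (cf i * μ i) * cf i := by
        rw [hAyexp, ← hcf]
        have := hv.inner_sum (fun i => cf i * μ i) cf Finset.univ
        simpa using this
      have h2 : ‖y‖ ^ 2 = ∑ i, cf i * cf i := by
        rw [← real_inner_self_eq_norm_sq, ← hcf]
        have := hv.inner_sum cf cf Finset.univ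
        simpa using this
      rw [h1, h2, Finset.mul_sum]
      refine Finset.sum_le_sum fun i _ => ?_
      rcases eq_or_ne (cf i) 0 with h0 | h0
      · rw [h0]; ring_nf; exact le_refl _
      · have hile : μ i ≤ lam := by
          by_contra hgt
          push_neg at hgt
          exact h0 (hczero i hgt)
        nlinarith [mul_self_nonneg (cf i)]
    have hAzz : (inner ℝ (A z) z : ℝ) ≤ lam * ‖z‖ ^ 2 :=
      le_trans (le_abs_self _) (hWbound z hz)
    have hnorm : ‖u‖ ^ 2 = ‖y‖ ^ 2 + ‖z‖ ^ 2 := by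
      rw [huyz, norm_add_sq_real, hinner_yz]
      ring
    have hexp : (inner ℝ (A u) u : ℝ) =
        (inner ℝ (A y) y : ℝ) + (inner ℝ (A y) z : ℝ) + (inner ℝ (A z) y : ℝ)
          + (inner ℝ (A z) z : ℝ) := by
      rw [huyz, map_add, inner_add_left, inner_add_right, inner_add_right]
      ring
    rw [hexp, hnorm, hAyz, hAzy]
    nlinarith
  · -- strict lower bound on W'
    intro u hu hu0
    obtain ⟨cf, hcf⟩ := (Submodule.mem_span_range_iff_exists_fun ℝ).1 hu
    have h1 : (inner ℝ (A u) u : ℝ) = ∑ i, (cf i * μ (i : sp).1) * cf i := by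
      have hAuexp : A u = ∑ i, (cf i * μ (i : sp).1) • w i := by
        rw [← hcf, map_sum]
        congr 1
        funext i
        rw [A.map_smul, hwdef]
        simp only []
        rw [heig i.1, smul_smul]
      rw [hAuexp, ← hcf]
      have := hworth.inner_sum (fun i => cf i * μ (i : sp).1) cf Finset.univ
      simpa using this
    have h2 : ‖u‖ ^ 2 = ∑ i, cf i * cf i := by
      rw [← real_inner_self_eq_norm_sq, ← hcf]
      have := hworth.inner_sum cf cf Finset.univ
      simpa using this
    have hex : ∃ i : sp, cf i ≠ 0 := by
      by_contra hall
      push_neg at hall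
      apply hu0
      rw [← hcf]
      simp [hall]
    obtain ⟨i0, hi0⟩ := hex
    rw [h1, h2, Finset.mul_sum]
    refine Finset.sum_lt_sum (fun i _ => ?_) ⟨i0, Finset.mem_univ i0, ?_⟩
    · have hmu : lam < μ i.1 := i.2
      nlinarith [mul_self_nonneg (cf i), hmu]
    · have hmu : lam < μ i0.1 := i0.2
      have hpos : 0 < cf i0 * cf i0 := mul_self_pos.2 hi0
      nlinarith

lemma dOn_le_pair (lam : ℝ) (A : H →L[ℝ] H) (W G : Submodule ℝ H) [FiniteDimensional ℝ W]
    (h : IsCompl W G) (hG : ∀ u ∈ G, (inner ℝ (A u) u : ℝ) ≤ lam * ‖u‖ ^ 2) :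
    dOn Set.univ lam A ≤ (Module.finrank ℝ W : ℕ∞) := by
  refine dOn_le _ _ _ fun F hFd hF => ?_
  by_contra hlt
  push_neg at hlt
  haveI := hFd
  obtain ⟨u, hu0, huF, huG, -⟩ := exists_nonzero_inf F W G ⊥ ⊤ h isCompl_bot_top
    (by simpa using hlt)
  have h1 := hF u huF hu0
  have h2 := hG u huG
  nlinarith
lemma dOn_eq_pair (lam : ℝ) (A : H →L[ℝ] H) (W G : Submodule ℝ H) [FiniteDimensional ℝ W]
    (h : IsCompl W G) (hG : ∀ u ∈ G, (inner ℝ (A u) u : ℝ) ≤ lam * ‖u‖ ^ 2)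
    (hW : ∀ u ∈ W, u ≠ 0 → lam * ‖u‖ ^ 2 < (inner ℝ (A u) u : ℝ)) :
    dOn Set.univ lam A = (Module.finrank ℝ W : ℕ∞) :=
  le_antisymm (dOn_le_pair lam A W G h hG) (le_dOn lam A W inferInstance hW)


end AuxiliaryLemmas

set_option maxHeartbeats 1000000

/-- Perturbation lemma (Lemma 4.9 of Sobolev): if `A₀(z)` is compact self-adjoint and
norm-continuous on `(-∞,0)`, `A₁(z)` is compact self-adjoint and norm-continuous on
`(-∞,0]`, `f(z) → 0` as `z → 0⁻`, and `f(z)·d(γ, A₀(z)) → l(γ)` for every `γ > 0` with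
`l` continuous on `(0,∞)`, then also `f(z)·d(γ, A₀(z)+A₁(z)) → l(γ)` for every `γ > 0`. -/
theorem weighted_counting_perturbation
    {H : Type*} [NormedAddCommGroup H] [InnerProductSpace ℝ H] [CompleteSpace H]
    (A₀ A₁ : ℝ → H →L[ℝ] H)
    (hA₀compact : ∀ z : ℝ, z < 0 → IsCompactOperator (A₀ z))
    (hA₀sa : ∀ z : ℝ, z < 0 → ∀ u v : H, (inner ℝ (A₀ z u) v : ℝ) = inner ℝ u (A₀ z v))
    (hA₀cont : ContinuousOn A₀ (Set.Iio 0))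
    (hA₁compact : ∀ z : ℝ, z ≤ 0 → IsCompactOperator (A₁ z))
    (hA₁sa : ∀ z : ℝ, z ≤ 0 → ∀ u v : H, (inner ℝ (A₁ z u) v : ℝ) = inner ℝ u (A₁ z v))
    (hA₁cont : ContinuousOn A₁ (Set.Iic 0))
    (f : ℝ → ℝ) (hf : Tendsto f (nhdsWithin 0 (Set.Iio 0)) (nhds 0))
    (l : ℝ → ℝ) (hl : ContinuousOn l (Set.Ioi 0))
    (hlim : ∀ γ : ℝ, 0 < γ →
      Tendsto (fun z : ℝ => f z * ((dOn Set.univ γ (A₀ z)).toNat : ℝ))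
        (nhdsWithin 0 (Set.Iio 0)) (nhds (l γ))) :
    ∀ γ : ℝ, 0 < γ →
      Tendsto (fun z : ℝ => f z * ((dOn Set.univ γ (A₀ z + A₁ z)).toNat : ℝ))
        (nhdsWithin 0 (Set.Iio 0)) (nhds (l γ)) := by
  intro γ hγ
  rw [Metric.tendsto_nhds]
  intro δ hδ
  -- choose ε using continuity of l at γ
  have hlcont : Tendsto l (nhdsWithin γ (Set.Ioi 0)) (nhds (l γ)) := hl γ (Set.mem_Ioi.2 hγ)
  rw [Metric.tendsto_nhdsWithin_nhds] at hlcont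
  obtain ⟨η, hη, hηprop⟩ := hlcont (δ/8) (by linarith)
  set ε : ℝ := min (γ/2) (η/2) with hεdef
  have hε0 : 0 < ε := lt_min (by linarith) (by linarith)
  have hεγ : ε ≤ γ/2 := min_le_left _ _
  have hεη : ε ≤ η/2 := min_le_right _ _
  have hγε1 : 0 < γ - ε := by linarith
  have hγε2 : 0 < γ + ε := by linarith
  have hl1 : |l (γ - ε) - l γ| < δ/8 := by
    have := hηprop (Set.mem_Ioi.2 hγε1)
      (show dist (γ - ε) γ < η by rw [Real.dist_eq]; rw [abs_of_nonpos (by linarith)]; linarith)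
    rwa [Real.dist_eq] at this
  have hl2 : |l (γ + ε) - l γ| < δ/8 := by
    have := hηprop (Set.mem_Ioi.2 hγε2)
      (show dist (γ + ε) γ < η by rw [Real.dist_eq]; rw [abs_of_nonneg (by linarith)]; linarith)
    rwa [Real.dist_eq] at this
  -- the two fixed spectral pairs for A₁ 0 and -(A₁ 0)
  obtain ⟨W₁, G₁, hW₁fd, hW₁c, hG₁, -⟩ :=
    spectral_pair (A₁ 0) (hA₁compact 0 le_rfl) (hA₁sa 0 le_rfl) (ε/2) (by linarith)
  have hnegcompact : IsCompactOperator (⇑(-(A₁ 0))) := (hA₁compact 0 le_rfl).neg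
  have hnegsym : ∀ u v : H, (inner ℝ ((-(A₁ 0)) u) v : ℝ) = inner ℝ u ((-(A₁ 0)) v) := by
    intro u v
    simp only [ContinuousLinearMap.neg_apply, inner_neg_left, inner_neg_right]
    rw [hA₁sa 0 le_rfl u v]
  obtain ⟨W₂, G₂, hW₂fd, hW₂c, hG₂, -⟩ :=
    spectral_pair (-(A₁ 0)) hnegcompact hnegsym (ε/2) (by linarith)
  set N₁ : ℕ := Module.finrank ℝ W₁ with hN₁
  set N₂ : ℕ := Module.finrank ℝ W₂ with hN₂
  -- eventual statements
  have hev1 := Metric.tendsto_nhds.1 (hlim (γ-ε) hγε1) (δ/8) (by linarith)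
  have hev2 := Metric.tendsto_nhds.1 (hlim (γ+ε) hγε2) (δ/8) (by linarith)
  have hC : (0:ℝ) < (N₁:ℝ) + N₂ + 1 := by positivity
  have hevf : ∀ᶠ z in nhdsWithin 0 (Set.Iio 0), |f z| * ((N₁:ℝ) + N₂) < δ/8 := by
    have h5 := Metric.tendsto_nhds.1 hf (δ/(8*((N₁:ℝ)+N₂+1))) (by positivity)
    filter_upwards [h5] with z hz
    rw [Real.dist_eq, sub_zero] at hz
    have h0 : (0:ℝ) ≤ |f z| := abs_nonneg _
    have h6 : δ/(8*((N₁:ℝ)+N₂+1))*((N₁:ℝ)+N₂+1) = δ/8 := by field_simp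
    have h7 := mul_lt_mul_of_pos_right hz hC
    have h8 : |f z| * ((N₁:ℝ)+N₂) ≤ |f z| * ((N₁:ℝ)+N₂+1) :=
      mul_le_mul_of_nonneg_left (by linarith) h0
    linarith
  have hevA : ∀ᶠ z in nhdsWithin 0 (Set.Iio 0), ‖A₁ z - A₁ 0‖ < ε/2 := by
    have h0 : Tendsto A₁ (nhdsWithin 0 (Set.Iio 0)) (nhds (A₁ 0)) :=
      (hA₁cont 0 (by simp)).mono_left (nhdsWithin_mono 0 Set.Iio_subset_Iic_self)
    have h5 := Metric.tendsto_nhds.1 h0 (ε/2) (by linarith)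
    filter_upwards [h5] with z hz
    rwa [dist_eq_norm] at hz
  filter_upwards [hev1, hev2, hevf, hevA, eventually_mem_nhdsWithin] with z h1 h2 h3 h4 hz5
  have hz : z < 0 := hz5
  -- spectral pairs for A₀ z and the sum
  obtain ⟨Wa, Ga, hWafd, hWac, hGa, hWa⟩ :=
    spectral_pair (A₀ z) (hA₀compact z hz) (hA₀sa z hz) (γ-ε) hγε1
  obtain ⟨Wb, Gb, hWbfd, hWbc, hGb, hWb⟩ :=
    spectral_pair (A₀ z) (hA₀compact z hz) (hA₀sa z hz) (γ+ε) hγε2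
  have hsumcompact : IsCompactOperator (⇑(A₀ z + A₁ z)) :=
    (hA₀compact z hz).add (hA₁compact z hz.le)
  have hsumsym : ∀ u v : H, (inner ℝ ((A₀ z + A₁ z) u) v : ℝ) = inner ℝ u ((A₀ z + A₁ z) v) := by
    intro u v
    simp only [ContinuousLinearMap.add_apply, inner_add_left, inner_add_right]
    rw [hA₀sa z hz u v, hA₁sa z hz.le u v]
  obtain ⟨Wc, Gc, hWcfd, hWcc, hGc, hWc⟩ := spectral_pair (A₀ z + A₁ z) hsumcompact hsumsym γ hγ
  have hda : dOn Set.univ (γ-ε) (A₀ z) = (Module.finrank ℝ Wa : ℕ∞) :=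
    dOn_eq_pair _ _ _ _ hWac hGa hWa
  have hdb : dOn Set.univ (γ+ε) (A₀ z) = (Module.finrank ℝ Wb : ℕ∞) :=
    dOn_eq_pair _ _ _ _ hWbc hGb hWb
  have hdc : dOn Set.univ γ (A₀ z + A₁ z) = (Module.finrank ℝ Wc : ℕ∞) :=
    dOn_eq_pair _ _ _ _ hWcc hGc hWc
  set a : ℕ := Module.finrank ℝ Wa
  set b : ℕ := Module.finrank ℝ Wb
  set c : ℕ := Module.finrank ℝ Wc
  -- perturbed form bounds
  have hG₁' : ∀ u ∈ G₁, (inner ℝ ((A₁ z) u) u : ℝ) ≤ ε * ‖u‖ ^ 2 := by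
    intro u huG
    have h5 := hG₁ u huG
    have h6 : (inner ℝ ((A₁ z - A₁ 0) u) u : ℝ) ≤ ε/2 * ‖u‖ ^ 2 := by
      calc (inner ℝ ((A₁ z - A₁ 0) u) u : ℝ) ≤ ‖(A₁ z - A₁ 0) u‖ * ‖u‖ := real_inner_le_norm _ _
      _ ≤ ‖A₁ z - A₁ 0‖ * ‖u‖ * ‖u‖ :=
          mul_le_mul_of_nonneg_right ((A₁ z - A₁ 0).le_opNorm u) (norm_nonneg _)
      _ ≤ ε/2 * ‖u‖ ^ 2 := by nlinarith [norm_nonneg u, sq_nonneg ‖u‖, h4]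
    have heq : (inner ℝ ((A₁ z) u) u : ℝ)
        = (inner ℝ ((A₁ 0) u) u : ℝ) + (inner ℝ ((A₁ z - A₁ 0) u) u : ℝ) := by
      rw [ContinuousLinearMap.sub_apply, inner_sub_left]; ring
    rw [heq]; linarith
  have hG₂' : ∀ u ∈ G₂, (inner ℝ ((-(A₁ z)) u) u : ℝ) ≤ ε * ‖u‖ ^ 2 := by
    intro u huG
    have h5 := hG₂ u huG
    have h6 : (inner ℝ ((-(A₁ z) - -(A₁ 0)) u) u : ℝ) ≤ ε/2 * ‖u‖ ^ 2 := by
      have hnorm : ‖-(A₁ z) - -(A₁ 0)‖ = ‖A₁ z - A₁ 0‖ := by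
        rw [show -(A₁ z) - -(A₁ 0) = -(A₁ z - A₁ 0) by abel, norm_neg]
      calc (inner ℝ ((-(A₁ z) - -(A₁ 0)) u) u : ℝ) ≤ ‖(-(A₁ z) - -(A₁ 0)) u‖ * ‖u‖ :=
            real_inner_le_norm _ _
      _ ≤ ‖-(A₁ z) - -(A₁ 0)‖ * ‖u‖ * ‖u‖ :=
          mul_le_mul_of_nonneg_right ((-(A₁ z) - -(A₁ 0)).le_opNorm u) (norm_nonneg _)
      _ ≤ ε/2 * ‖u‖ ^ 2 := by rw [hnorm]; nlinarith [norm_nonneg u, sq_nonneg ‖u‖, h4]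
    have heq : (inner ℝ ((-(A₁ z)) u) u : ℝ)
        = (inner ℝ ((-(A₁ 0)) u) u : ℝ) + (inner ℝ ((-(A₁ z) - -(A₁ 0)) u) u : ℝ) := by
      rw [ContinuousLinearMap.sub_apply, inner_sub_left]; ring
    rw [heq]; linarith
  -- two Weyl-type inequalities
  have hineq1 : dOn Set.univ γ (A₀ z + A₁ z) ≤ ((a + N₁ : ℕ) : ℕ∞) := by
    have h5 := dOn_add_le (A₀ z) (A₁ z) (γ-ε) ε Wa Ga W₁ G₁ hWac hW₁c hGa hG₁'
    rwa [show γ - ε + ε = γ by ring] at h5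
  have hineq2 : dOn Set.univ (γ+ε) (A₀ z) ≤ ((c + N₂ : ℕ) : ℕ∞) := by
    have h5 := dOn_add_le (A₀ z + A₁ z) (-(A₁ z)) γ ε Wc Gc W₂ G₂ hWcc hW₂c hGc hG₂'
    rwa [add_neg_cancel_right] at h5
  -- natural number inequalities
  have hca : c ≤ a + N₁ := by
    rw [hdc] at hineq1
    exact_mod_cast hineq1
  have hbc : b ≤ c + N₂ := by
    rw [hdb] at hineq2
    exact_mod_cast hineq2
  have hba : b ≤ a := by
    have h5 := dOn_mono (γ-ε) (γ+ε) (by linarith) (A₀ z)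
    rw [hda, hdb] at h5
    exact_mod_cast h5
  -- rewrite the goal and hypotheses in terms of a b c
  rw [hda] at h1
  rw [hdb] at h2
  simp only [ENat.toNat_coe] at h1 h2
  rw [Real.dist_eq] at h1 h2
  rw [hdc]
  simp only [ENat.toNat_coe]
  rw [Real.dist_eq]
  -- final arithmetic
  set fz := f z with hfz
  have hcaR : (c:ℝ) - a ≤ N₁ := by
    have : (c:ℝ) ≤ a + N₁ := by exact_mod_cast hca
    linarith
  have hacR : (a:ℝ) - c ≤ ((a:ℝ) - b) + N₂ := by
    have : (b:ℝ) ≤ c + N₂ := by exact_mod_cast hbc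
    linarith
  have hab0 : (0:ℝ) ≤ (a:ℝ) - b := by
    have : (b:ℝ) ≤ a := by exact_mod_cast hba
    linarith
  have key1 : |fz * c - fz * a| ≤ |fz| * ((N₁:ℝ) + N₂) + |fz * a - fz * b| := by
    have h5 : |fz * c - fz * a| = |fz| * |(c:ℝ) - a| := by rw [← mul_sub, abs_mul]
    have h6 : |(c:ℝ) - a| ≤ ((N₁:ℝ) + N₂) + ((a:ℝ) - b) := by
      rw [abs_le]
      constructor <;> [linarith; linarith]
    have h7 : |fz * a - fz * b| = |fz| * ((a:ℝ) - b) := by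
      rw [← mul_sub, abs_mul, abs_of_nonneg hab0]
    calc |fz * c - fz * a| = |fz| * |(c:ℝ) - a| := h5
    _ ≤ |fz| * (((N₁:ℝ) + N₂) + ((a:ℝ) - b)) := mul_le_mul_of_nonneg_left h6 (abs_nonneg _)
    _ = |fz| * ((N₁:ℝ) + N₂) + |fz| * ((a:ℝ) - b) := by ring
    _ = |fz| * ((N₁:ℝ) + N₂) + |fz * a - fz * b| := by rw [h7]
  have key2 : |fz * a - fz * b| ≤ |fz * a - l (γ-ε)| + |l (γ-ε) - l γ|
      + |l γ - l (γ+ε)| + |l (γ+ε) - fz * b| := by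
    have t1 := abs_sub_le (fz * a) (l (γ-ε)) (fz * b)
    have t2 := abs_sub_le (l (γ-ε)) (l γ) (fz * b)
    have t3 := abs_sub_le (l γ) (l (γ+ε)) (fz * b)
    linarith
  have key3 : |fz * c - l γ| ≤ |fz * c - fz * a| + |fz * a - l (γ-ε)| + |l (γ-ε) - l γ| := by
    have t1 := abs_sub_le (fz * c) (fz * a) (l γ)
    have t2 := abs_sub_le (fz * a) (l (γ-ε)) (l γ)
    linarith
  have habs1 : |l γ - l (γ+ε)| = |l (γ+ε) - l γ| := abs_sub_comm _ _
  have habs2 : |l (γ+ε) - fz * b| = |fz * b - l (γ+ε)| := abs_sub_comm _ _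
  linarith [key1, key2, key3, h1, h2, h3, hl1, hl2, habs1.le, habs2.le]

end
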